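/- Let A be a discrete valuation ring whose residue field F has characteristic 2, and let K be the quotient field of A. Let φ be a quadratic form over F and let φ_l be a quadratic form defined over A whose reduction modulo the maximal ideal of A is isometric to φ. If the quadratic form over K induced by φ_l is isotropic, then φ is isotropic over F. -/

import Mathlib

/-!
Background definitions for quadratic forms over fields of characteristic 2,
following the conventions of "Isotropy of quadratic forms over function fields
in characteristic 2".  A quadratic form of dimension `n` over a commutative ring
`R` is represented by a coefficient matrix `c : ι → ι → R` (`ι` a finite index
type), the associated quadratic map being `x ↦ ∑ i j, c i j * x i * x j`; every
quadratic form on a finite-dimensional vector space (a map satisfying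
`φ(av) = a²φ(v)` whose polar form is bilinear) arises this way.
-/

open scoped BigOperators Pointwise Classical

namespace QF2

variable {R S : Type*} [CommRing R] [CommRing S] {ι κ : Type} [Fintype ι] [Fintype κ]

/-- The value at `x` of the quadratic form with coefficient matrix `c`, namely
`∑ i j, c i j * x i * x j`. -/
def eval (c : ι → ι → R) (x : ι → R) : R := ∑ i, ∑ j, c i j * x i * x j

/-- The polar form `b(x,y) = q(x+y) - q(x) - q(y)` of the quadratic form `c`. -/
def polar (c : ι → ι → R) (x y : ι → R) : R := ∑ i, ∑ j, c i j * (x i * y j + x j * y i)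

/-- A quadratic form is isotropic if it vanishes on a nonzero vector. -/
def IsIsotropic (c : ι → ι → R) : Prop := ∃ x : ι → R, x ≠ 0 ∧ eval c x = 0

/-- Anisotropic: not isotropic. -/
abbrev IsAnisotropic (c : ι → ι → R) : Prop := ¬ IsIsotropic c

/-- Base change of a quadratic form along a ring homomorphism. -/
def map (σ : R →+* S) (c : ι → ι → R) : ι → ι → S := fun i j => σ (c i j)

/-- Quasilinear (totally singular): the polar form vanishes identically. -/
def IsQuasilinear (c : ι → ι → R) : Prop := ∀ x y : ι → R, polar c x y = 0

/-- Nondefective (quasilinear index `i_d = 0`): no nonzero vector of the radical of the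
polar form is isotropic. -/
def IsNondefective (c : ι → ι → R) : Prop :=
  ∀ x : ι → R, (∀ y, polar c x y = 0) → eval c x = 0 → x = 0

/-- `d` is isometric to `c`. -/
def Isometric (c : ι → ι → R) (d : κ → κ → R) : Prop :=
  ∃ g : (κ → R) ≃ₗ[R] (ι → R), ∀ x, eval d x = eval c (g x)

/-- `D_R^*(c)`: the set of nonzero represented elements. -/
def reps (c : ι → ι → R) : Set R := {a | a ≠ 0 ∧ ∃ x : ι → R, eval c x = a}

/-- `D_R^*(c)^m`: products of `m` nonzero represented elements. -/
def repsPow (c : ι → ι → R) (m : ℕ) : Set R :=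
  {a | ∃ v : Fin m → R, (∀ k, v k ∈ reps c) ∧ a = ∏ k, v k}

/-- The multiplicative subgroup of `F^*` generated by a set `s` of nonzero elements,
realized as a subset of `F` (products of elements of `s` and their inverses). -/
def genBy {F : Type*} [Field F] (s : Set F) : Set F :=
  ↑(Submonoid.closure (s ∪ Inv.inv '' s))

/-- `⟨D_F^*(c)⟩`: the subgroup generated by the nonzero represented elements. -/
def genGroup {F : Type*} [Field F] (c : ι → ι → F) : Set F := genBy (reps c)

/-- `⟨D_F^*(c)²⟩`. -/
def genGroup2 {F : Type*} [Field F] (c : ι → ι → F) : Set F := genBy (repsPow c 2)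

/-- The scaled quadratic form `a·c`. -/
def smulQF (a : R) (c : ι → ι → R) : ι → ι → R := fun i j => a * c i j

/-- Orthogonal sum of two quadratic forms. -/
def orthSum (c : ι → ι → R) (d : κ → κ → R) : (ι ⊕ κ) → (ι ⊕ κ) → R
  | Sum.inl i, Sum.inl j => c i j
  | Sum.inr i, Sum.inr j => d i j
  | _, _ => 0

lemma eval_add (c : ι → ι → R) (x y : ι → R) :
    eval c (x + y) = eval c x + eval c y + polar c x y := by
  unfold eval polar
  rw [← Finset.sum_add_distrib, ← Finset.sum_add_distrib]
  refine Finset.sum_congr rfl fun i _ => ?_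
  rw [← Finset.sum_add_distrib, ← Finset.sum_add_distrib]
  refine Finset.sum_congr rfl fun j _ => ?_
  simp only [Pi.add_apply]; ring

lemma polar_add_left (c : ι → ι → R) (x x' y : ι → R) :
    polar c (x + x') y = polar c x y + polar c x' y := by
  unfold polar
  rw [← Finset.sum_add_distrib]
  refine Finset.sum_congr rfl fun i _ => ?_
  rw [← Finset.sum_add_distrib]
  refine Finset.sum_congr rfl fun j _ => ?_
  simp only [Pi.add_apply]; ring

lemma polar_smul_left (c : ι → ι → R) (a : R) (x y : ι → R) :
    polar c (a • x) y = a * polar c x y := by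
  unfold polar
  rw [Finset.mul_sum]
  refine Finset.sum_congr rfl fun i _ => ?_
  rw [Finset.mul_sum]
  refine Finset.sum_congr rfl fun j _ => ?_
  simp only [Pi.smul_apply, smul_eq_mul]; ring

lemma eval_smul (c : ι → ι → R) (a : R) (x : ι → R) :
    eval c (a • x) = a ^ 2 * eval c x := by
  unfold eval
  rw [Finset.mul_sum]
  refine Finset.sum_congr rfl fun i _ => ?_
  rw [Finset.mul_sum]
  refine Finset.sum_congr rfl fun j _ => ?_
  simp only [Pi.smul_apply, smul_eq_mul]; ring

/-- The defect of a quadratic form: the submodule of isotropic vectors lying in the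
radical of the polar form. -/
def defectSubmodule (c : ι → ι → R) : Submodule R (ι → R) where
  carrier := {x | (∀ y, polar c x y = 0) ∧ eval c x = 0}
  zero_mem' := by
    constructor
    · intro y; unfold polar; simp
    · unfold eval; simp
  add_mem' := by
    rintro x x' ⟨hx1, hx2⟩ ⟨hx1', hx2'⟩
    refine ⟨fun y => ?_, ?_⟩
    · rw [polar_add_left, hx1 y, hx1' y, add_zero]
    · rw [eval_add, hx2, hx2', hx1 x', add_zero, add_zero]
  smul_mem' := by
    rintro a x ⟨hx1, hx2⟩
    refine ⟨fun y => ?_, ?_⟩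
    · rw [polar_smul_left, hx1 y, mul_zero]
    · rw [eval_smul, hx2, mul_zero]

/-- The quasilinear index (defect) `i_d` of a quadratic form. -/
noncomputable def defectIndex (c : ι → ι → R) : ℕ :=
  Module.finrank R (defectSubmodule c)

/-- The total isotropy index `i_t`: the dimension of a maximal totally isotropic
subspace. -/
noncomputable def totalIndex (c : ι → ι → R) : ℕ :=
  sSup {m | ∃ W : Submodule R (ι → R), (∀ x ∈ W, eval c x = 0) ∧ Module.finrank R W = m}

/-- The Witt index `i_W = i_t - i_d`. -/
noncomputable def wittIndex (c : ι → ι → R) : ℕ := totalIndex c - defectIndex c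

variable {F : Type u} [Field F]

/-- The homogeneous quadratic polynomial `φ(X_1, …, X_n)` attached to a quadratic form. -/
noncomputable def poly (c : ι → ι → F) : MvPolynomial ι F :=
  ∑ i, ∑ j, MvPolynomial.C (c i j) * (MvPolynomial.X i * MvPolynomial.X j)

/-- The canonical map from `F` to the total fraction ring of `A/(f)`; when `f` is
irreducible, the target is the function field `F(f)`. -/
noncomputable def ffHom {A : Type*} [CommRing A] (σ : F →+* A) (f : A) :
    F →+* FractionRing (A ⧸ Ideal.span {f}) :=
  (algebraMap (A ⧸ Ideal.span {f}) (FractionRing (A ⧸ Ideal.span {f}))).comp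
    ((Ideal.Quotient.mk (Ideal.span {f})).comp σ)

/-- The canonical map from `R` into (the total fraction ring of) `R[X_i : i ∈ κ]`;
for a field this is the inclusion into the rational function field `F(X_i : i ∈ κ)`. -/
noncomputable def ratHom (κ : Type) (R : Type*) [CommRing R] :
    R →+* FractionRing (MvPolynomial κ R) :=
  (algebraMap (MvPolynomial κ R) (FractionRing (MvPolynomial κ R))).comp MvPolynomial.C

/-- The canonical map from `F` into the rational function field `F(X)`. -/
noncomputable def ratHom1 (F : Type u) [Field F] : F →+* FractionRing (Polynomial F) :=
  (algebraMap (Polynomial F) (FractionRing (Polynomial F))).comp Polynomial.C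

/-- `φ_{F(ψ)}` is isotropic, where `F(ψ)` is the function field of the quadratic form `ψ`.
When the polynomial of `ψ` is irreducible this is the quotient field of `F[X]/(ψ(X))`;
otherwise (`ψ ≅ ⟨a⟩`, `ψ ≅ ℍ`, or degenerate defective cases) `F(ψ)` is a purely
transcendental extension of `F`, over which isotropy is equivalent to isotropy over `F`. -/
def IsotropicOverFunField (c : ι → ι → F) (d : κ → κ → F) : Prop :=
  (Irreducible (poly d) → IsIsotropic (map (ffHom MvPolynomial.C (poly d)) c)) ∧
  (¬ Irreducible (poly d) → IsIsotropic c)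

/-- Stable birational equivalence of (nondefective) quadratic forms:
`φ_{F(ψ)}` and `ψ_{F(φ)}` are both isotropic. -/
def StbEquiv (c : ι → ι → F) (d : κ → κ → F) : Prop :=
  IsotropicOverFunField c d ∧ IsotropicOverFunField d c

/-- The leading coefficient of a multivariate polynomial with respect to the
lexicographic ordering on monomials. -/
noncomputable def lexLC {l : ℕ} {F : Type*} [CommSemiring F] (f : MvPolynomial (Fin l) F) : F :=
  if h : f = 0 then 0
  else f.coeff (ofLex ((f.support.image (toLex : (Fin l →₀ ℕ) → Lex (Fin l →₀ ℕ))).max'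
    (Finset.Nonempty.image (MvPolynomial.support_nonempty.mpr h) _)))

/-- The coefficient matrix of the tensor product `π ⊗ φ` of the bilinear Pfister form
`π = ⟨⟨a 1, …, a n⟩⟩_b` with the quadratic form `c` (with respect to the standard basis,
`π ⊗ φ ≅ ⊥_{S ⊆ {1,…,n}} (∏_{i ∈ S} a i) φ`). -/
def pfisterMul {n : ℕ} (a : Fin n → R) (c : ι → ι → R) :
    ((Fin n → Bool) × ι) → ((Fin n → Bool) × ι) → R :=
  fun p q =>
    if p.1 = q.1 then (∏ i, if p.1 i then a i else 1) * c p.2 q.2 else 0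


lemma eval_map (σ : R →+* S) (c : ι → ι → R) (x : ι → R) :
    eval (map σ c) (fun i => σ (x i)) = σ (eval c x) := by
  unfold eval map
  rw [map_sum]
  refine Finset.sum_congr rfl fun i _ => ?_
  rw [map_sum]
  refine Finset.sum_congr rfl fun j _ => ?_
  rw [map_mul, map_mul]

lemma descend {A : Type*} [CommRing A] [IsDomain A] [IsDiscreteValuationRing A]
    {ι : Type} [Fintype ι] (φl : ι → ι → A) {π : A} (hπ : Irreducible π) :
    ∀ m : ℕ, ∀ y : ι → A, eval φl y = 0 → (∃ i, ¬ π ^ (m + 1) ∣ y i) →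
      ∃ z : ι → A, (∃ i, IsUnit (z i)) ∧ eval φl z = 0 := by
  intro m
  induction m with
  | zero =>
    rintro y hy ⟨i, hi⟩
    refine ⟨y, ⟨i, ?_⟩, hy⟩
    by_contra hu
    exact hi (by simpa using (Ideal.mem_span_singleton.mp
      (hπ.maximalIdeal_eq ▸ IsLocalRing.mem_maximalIdeal (y i) |>.mpr hu)))
  | succ m ih =>
    rintro y hy ⟨i, hi⟩
    by_cases hu : ∃ j, IsUnit (y j)
    · exact ⟨y, hu, hy⟩
    push_neg at hu
    have hdvd : ∀ j, ∃ c, y j = π * c := fun j =>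
      Ideal.mem_span_singleton.mp
        (hπ.maximalIdeal_eq ▸ IsLocalRing.mem_maximalIdeal (y j) |>.mpr (hu j))
    choose z hz using hdvd
    have hyz : y = π • z := by funext j; simpa using hz j
    have hπ0 : π ≠ 0 := hπ.ne_zero
    have hez : eval φl z = 0 := by
      have : π ^ 2 * eval φl z = 0 := by rw [← eval_smul, ← hyz, hy]
      rcases mul_eq_zero.mp this with h | h
      · exact absurd h (pow_ne_zero 2 hπ0)
      · exact h
    refine ih z hez ⟨i, fun hdvd' => hi ?_⟩
    rw [hz i, pow_succ']
    exact mul_dvd_mul_left π hdvd'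

/-- Let `A` be a discrete valuation ring whose residue field `F` has
characteristic 2, and let `K` be the quotient field of `A`.  Let `φ` be a quadratic form
over `F` and `φl` a quadratic form over `A` whose reduction modulo the maximal ideal of
`A` is isometric to `φ`.  If the quadratic form over `K` induced by `φl` is isotropic,
then `φ` is isotropic over `F`. -/
theorem stmt0 {A : Type*} [CommRing A] [IsDomain A] [IsDiscreteValuationRing A]
    [CharP (IsLocalRing.ResidueField A) 2]
    {ι : Type} [Fintype ι]
    (φ : ι → ι → IsLocalRing.ResidueField A) (φl : ι → ι → A)
    (hred : Isometric φ (map (IsLocalRing.residue A) φl))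
    (hiso : IsIsotropic (map (algebraMap A (FractionRing A)) φl)) :
    IsIsotropic φ := by
  classical
  obtain ⟨x, hx0, hx⟩ := hiso
  obtain ⟨b, hb⟩ := IsLocalization.exist_integer_multiples_of_finite (nonZeroDivisors A) x
  choose y hy using hb
  have hinj : Function.Injective (algebraMap A (FractionRing A)) := IsFractionRing.injective A (FractionRing A)
  have hbK : algebraMap A (FractionRing A) (b : A) ≠ 0 := by
    intro h
    exact nonZeroDivisors.ne_zero b.2 (hinj (by simpa using h))
  -- eval of y is zero
  have hevaly : eval φl y = 0 := by
    apply hinj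
    rw [map_zero, ← eval_map (algebraMap A (FractionRing A)) φl y]
    have hfun : (fun i => algebraMap A (FractionRing A) (y i)) = (algebraMap A (FractionRing A) (b : A)) • x := by
      funext i
      rw [hy i]
      simp [Algebra.smul_def]
    rw [hfun, eval_smul, hx, mul_zero]
  -- y is nonzero at some coordinate
  obtain ⟨i0, hi0⟩ : ∃ i, x i ≠ 0 := by
    by_contra h
    push_neg at h
    exact hx0 (by funext i; exact h i)
  have hy0 : y i0 ≠ 0 := by
    intro h
    apply hi0
    have := hy i0
    rw [h, map_zero] at this
    have : algebraMap A (FractionRing A) (b : A) * x i0 = 0 := by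
      rw [← Algebra.smul_def]; exact this.symm
    rcases mul_eq_zero.mp this with h' | h'
    · exact absurd h' hbK
    · exact h'
  -- get a vector with a unit coordinate
  obtain ⟨π, hπ⟩ := IsDiscreteValuationRing.exists_irreducible A
  obtain ⟨n, u, hu⟩ := IsDiscreteValuationRing.eq_unit_mul_pow_irreducible hy0 hπ
  have hnd : ¬ π ^ (n + 1) ∣ y i0 := by
    rw [hu]
    rintro ⟨c, hc⟩
    rw [pow_succ'] at hc
    have hπn : (π : A) ^ n ≠ 0 := pow_ne_zero n hπ.ne_zero
    have : (u : A) = π * c := by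
      apply mul_left_cancel₀ hπn
      rw [mul_comm ((π : A) ^ n) ((u : A)), hc]; ring
    exact hπ.not_isUnit (isUnit_of_dvd_unit ⟨c, this⟩ u.isUnit)
  obtain ⟨z, ⟨i, hiu⟩, hz⟩ := descend φl hπ n y hevaly ⟨i0, hnd⟩
  -- reduce modulo the maximal ideal
  set w : ι → IsLocalRing.ResidueField A := fun j => IsLocalRing.residue A (z j)
  have hw0 : w ≠ 0 := by
    intro h
    have : w i = 0 := by rw [h]; rfl
    exact (IsLocalRing.residue_ne_zero_iff_isUnit (z i)).mpr hiu this
  have hew : eval (map (IsLocalRing.residue A) φl) w = 0 := by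
    show eval (map (IsLocalRing.residue A) φl) (fun j => IsLocalRing.residue A (z j)) = 0
    rw [eval_map, hz, map_zero]
  obtain ⟨g, hg⟩ := hred
  refine ⟨g w, ?_, ?_⟩
  · intro h
    exact hw0 ((LinearEquiv.map_eq_zero_iff g).mp h)
  · rw [← hg w, hew]

end QF2
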